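/- If X is a Hermitian ℍ-module with invariant form, S a spin module for C(V^∨) with form satisfying ⟨γ(a)s, s'⟩ = ⟨s, γ(aᵗ)s'⟩, then the Dirac operator D = Σᵢ π(ω̃ᵢ) ⊗ γ(ωⁱ) on X ⊗ S is self-adjoint with respect to the tensor product Hermitian form. -/

import Mathlib

open scoped TensorProduct

/-- If X is a Hermitian ℍ-module (with invariant form for the
anti-involution *, under which ω̃* = −ω̃), and S is a spin module for C(V^∨)
whose form satisfies ⟨γ(a)s, s'⟩ = ⟨s, γ(aᵗ)s'⟩ (aᵗ the transpose
antiautomorphism, ωᵗ = −ω), then the Dirac operator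
D = Σᵢ π(ω̃ᵢ) ⊗ γ(ωⁱ) on X ⊗ S is self-adjoint for the product form. -/
theorem stmt_16
    {V V' : Type} [AddCommGroup V] [Module ℂ V] [DecidableEq V]
    [AddCommGroup V'] [Module ℂ V']
    (P : V →ₗ[ℂ] V' →ₗ[ℂ] ℂ)
    {W : Type} [Group W]
    (σ : W →* (V ≃ₗ[ℂ] V)) (σ' : W →* (V' ≃ₗ[ℂ] V'))
    (R Rpos Δ : Finset V) (s : V → W) (c : V → ℝ) (cor : V → V')
    {H : Type} [Ring H] [Algebra ℂ H]
    (t : W → H) (x : V' →ₗ[ℂ] H)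
    (ht1 : t 1 = 1) (htm : ∀ w₁ w₂ : W, t (w₁ * w₂) = t w₁ * t w₂)
    (hxc : ∀ ω₁ ω₂ : V', x ω₁ * x ω₂ = x ω₂ * x ω₁)
    (hrel : ∀ α ∈ Δ, ∀ ω : V', x ω * t (s α) - t (s α) * x (σ' (s α) ω)
        = algebraMap ℂ H ((c α : ℂ) * P α ω))
    (hΔR : Δ ⊆ Rpos) (hRposR : Rpos ⊆ R)
    (hRpos : ∀ α ∈ R, (α ∈ Rpos ∧ -α ∉ Rpos) ∨ (α ∉ Rpos ∧ -α ∈ Rpos))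
    (hRW : ∀ (w : W), ∀ α ∈ R, σ w α ∈ R)
    (hs2 : ∀ α ∈ R, s α * s α = 1)
    (hconj : ∀ (w : W), ∀ α ∈ R, s (σ w α) = w * s α * w⁻¹)
    (hsneg : ∀ α ∈ R, s (-α) = s α)
    (hcW : ∀ (w : W) (α : V), c (σ w α) = c α)
    (hcneg : ∀ α ∈ R, c (-α) = c α)
    (hPW : ∀ (w : W) (v : V) (v' : V'), P (σ w v) (σ' w v') = P v v')
    (hsV : ∀ α ∈ R, ∀ v : V, σ (s α) v = v - P v (cor α) • α)
    (hsV' : ∀ α ∈ R, ∀ ω : V', σ' (s α) ω = ω - P α ω • cor α)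
    (hgen : ∀ w : W, ∃ L : List V, (∀ α ∈ L, α ∈ Δ) ∧ w = (L.map s).prod)
    {n : ℕ} (B : V' →ₗ[ℂ] V' →ₗ[ℂ] ℂ)
    (hBsym : ∀ u v : V', B u v = B v u)
    (hBW : ∀ (w : W) (u v : V'), B (σ' w u) (σ' w v) = B u v)
    (b b' : Module.Basis (Fin n) ℂ V')
    (hdual : ∀ i j, B (b i) (b' j) = if i = j then 1 else 0)
    (QC : QuadraticForm ℂ V') (hQC : ∀ v : V', QC v = - B v v)
    (st : H → H)
    (hst_add : ∀ a b : H, st (a + b) = st a + st b)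
    (hst_mul : ∀ a b : H, st (a * b) = st b * st a)
    (hst_smul : ∀ (z : ℂ) (a : H), st (z • a) = (starRingEnd ℂ z) • st a)
    (hst_tilde : ∀ ω : V',
      st (x ω - (1/2 : ℂ) • ∑ β ∈ Rpos, ((c β : ℂ) * P β ω) • t (s β))
        = -(x ω - (1/2 : ℂ) • ∑ β ∈ Rpos, ((c β : ℂ) * P β ω) • t (s β)))
    {X S : Type} [AddCommGroup X] [Module ℂ X] [AddCommGroup S] [Module ℂ S]
    (π : H →ₐ[ℂ] Module.End ℂ X)
    (γ : CliffordAlgebra QC →ₐ[ℂ] Module.End ℂ S)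
    (BX : X → X → ℂ) (BS : S → S → ℂ)
    (hBXinv : ∀ (h : H) (a v : X), BX (π h a) v = BX a (π (st h) v))
    (hBSinv : ∀ (a : CliffordAlgebra QC) (s₁ s₂ : S),
      BS (γ a s₁) s₂
        = BS s₁ (γ (CliffordAlgebra.reverse (CliffordAlgebra.involute a)) s₂))
    (BT : (X ⊗[ℂ] S) → (X ⊗[ℂ] S) → ℂ)
    (hBT_addl : ∀ u v w₀ : X ⊗[ℂ] S, BT (u + v) w₀ = BT u w₀ + BT v w₀)
    (hBT_addr : ∀ u v w₀ : X ⊗[ℂ] S, BT u (v + w₀) = BT u v + BT u w₀)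
    (hBT : ∀ (x₁ x₂ : X) (s₁ s₂ : S),
      BT (x₁ ⊗ₜ[ℂ] s₁) (x₂ ⊗ₜ[ℂ] s₂) = BX x₁ x₂ * BS s₁ s₂) :
    ∀ u v : X ⊗[ℂ] S,
      BT ((∑ i, TensorProduct.map
            (π (x (b i) - (1/2 : ℂ) • ∑ β ∈ Rpos, ((c β : ℂ) * P β (b i)) • t (s β)))
            (γ (CliffordAlgebra.ι QC (b' i)))) u) v
        = BT u ((∑ i, TensorProduct.map
            (π (x (b i) - (1/2 : ℂ) • ∑ β ∈ Rpos, ((c β : ℂ) * P β (b i)) • t (s β)))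
            (γ (CliffordAlgebra.ι QC (b' i)))) v) := by

  intro u v
  -- abbreviations
  set D : Fin n → (X ⊗[ℂ] S) →ₗ[ℂ] (X ⊗[ℂ] S) := fun i =>
    TensorProduct.map
      (π (x (b i) - (1/2 : ℂ) • ∑ β ∈ Rpos, ((c β : ℂ) * P β (b i)) • t (s β)))
      (γ (CliffordAlgebra.ι QC (b' i))) with hD
  have hzero_l : ∀ w : X ⊗[ℂ] S, BT 0 w = 0 := by
    intro w
    have h := hBT_addl 0 0 w
    rw [add_zero] at h
    exact (left_eq_add.mp h)
  have hzero_r : ∀ w : X ⊗[ℂ] S, BT w 0 = 0 := by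
    intro w
    have h := hBT_addr w 0 0
    rw [add_zero] at h
    exact (left_eq_add.mp h)
  have hst0 : st 0 = 0 := by
    have h := hst_add 0 0
    rw [add_zero] at h
    exact (left_eq_add.mp h)
  have hstneg : ∀ a : H, st (-a) = -st a := by
    intro a
    have h := hst_add a (-a)
    rw [add_neg_cancel, hst0] at h
    exact eq_neg_of_add_eq_zero_right h.symm
  have key : ∀ i : Fin n, ∀ u v : X ⊗[ℂ] S, BT (D i u) v = BT u (D i v) := by
    intro i u v
    set h : H := x (b i) - (1/2 : ℂ) • ∑ β ∈ Rpos, ((c β : ℂ) * P β (b i)) • t (s β) with hh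
    set a : CliffordAlgebra QC := CliffordAlgebra.ι QC (b' i) with ha
    have hstH : st (-h) = h := by rw [hstneg, hst_tilde, neg_neg]
    have hrev : CliffordAlgebra.reverse (CliffordAlgebra.involute (-a)) = a := by
      simp [ha, CliffordAlgebra.involute_ι, CliffordAlgebra.reverse_ι]
    induction u using TensorProduct.induction_on with
    | zero => rw [map_zero, hzero_l, hzero_l]
    | add p q hp hq => rw [map_add, hBT_addl, hBT_addl, hp, hq]
    | tmul x₁ s₁ =>
      induction v using TensorProduct.induction_on with
      | zero => rw [map_zero, hzero_r, hzero_r]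
      | add p q hp hq => rw [map_add, hBT_addr, hBT_addr, hp, hq]
      | tmul x₂ s₂ =>
        have e1 : D i (x₁ ⊗ₜ[ℂ] s₁) = (π (-h) x₁) ⊗ₜ[ℂ] (γ (-a) s₁) := by
          rw [hD]
          simp only [TensorProduct.map_tmul, map_neg, LinearMap.neg_apply,
            TensorProduct.neg_tmul, TensorProduct.tmul_neg, neg_neg]
          rfl
        rw [e1, hBT, hBXinv, hBSinv, hstH, hrev, ← hBT, hD,
          TensorProduct.map_tmul]
  have hsum_l : ∀ (f : Fin n → X ⊗[ℂ] S) (w : X ⊗[ℂ] S),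
      BT (∑ i, f i) w = ∑ i, BT (f i) w := by
    intro f w
    induction (Finset.univ : Finset (Fin n)) using Finset.cons_induction with
    | empty => simpa using hzero_l w
    | cons j t hj ih => rw [Finset.sum_cons, Finset.sum_cons, hBT_addl, ih]
  have hsum_r : ∀ (f : Fin n → X ⊗[ℂ] S) (w : X ⊗[ℂ] S),
      BT w (∑ i, f i) = ∑ i, BT w (f i) := by
    intro f w
    induction (Finset.univ : Finset (Fin n)) using Finset.cons_induction with
    | empty => simpa using hzero_r w
    | cons j t hj ih => rw [Finset.sum_cons, Finset.sum_cons, hBT_addr, ih]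
  calc BT ((∑ i, D i) u) v = ∑ i, BT (D i u) v := by
        rw [LinearMap.sum_apply, hsum_l]
    _ = ∑ i, BT u (D i v) := Finset.sum_congr rfl fun i _ => key i u v
    _ = BT u ((∑ i, D i) v) := by rw [LinearMap.sum_apply, hsum_r]
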